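/- Suppose f is worst-case monotone and worst-case submodular, f(∅) = 0, and f(φ) = Q for every φ ∈ U, where Q > 0. Let π^g be a worst-case density-greedy policy, let φ' ∈ U be a worst-case realization of π^g (i.e., φ' minimizes f(ψ(π^g,φ)) over φ ∈ U), and let h be the virtual-time utility interpolant of the execution of π^g under φ'. Let π* be any adaptive policy that covers Q (i.e., f(ψ(π*,φ)) ≥ Q for every φ ∈ U) with c* = c_wc(π*) > 0. Then for every positive integer L, h(L) ≥ (1 − e^{−L/c*}) · Q. -/

import Mathlib

namespace WCAS

variable {ι O : Type*}

/-- The domain of a partial realization `ψ : ι → Option O`. -/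
def dom (ψ : ι → Option O) : Set ι := {e | ψ e ≠ none}

/-- A (full) realization `φ` is consistent with a partial realization `ψ`. -/
def consistent (φ : ι → O) (ψ : ι → Option O) : Prop :=
  ∀ e o, ψ e = some o → φ e = o

/-- `ψ` is a subrealization of `ψ'` (written `ψ ⊆ ψ'`). -/
def subreal (ψ ψ' : ι → Option O) : Prop :=
  ∀ e o, ψ e = some o → ψ' e = some o

/-- Extend a partial realization `ψ` by observing state `o` for item `e`. -/
def extendPR [DecidableEq ι] (ψ : ι → Option O) (e : ι) (o : O) : ι → Option O :=
  fun x => if x = e then some o else ψ x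

/-- The empty partial realization. -/
def emptyPR : ι → Option O := fun _ => none

/-- View a full realization as a partial realization with full domain. -/
def toPR (φ : ι → O) : ι → Option O := fun e => some (φ e)

/-- `O(e, ψ)`: the set of possible states of item `e` given observation `ψ`,
with respect to the set `U` of possible realizations. -/
def Ostates (U : Set (ι → O)) (e : ι) (ψ : ι → Option O) : Set O :=
  {o | ∃ φ ∈ U, consistent φ ψ ∧ φ e = o}

/-- The worst-case marginal utility `Δwc(e | ψ)` of item `e` on top of `ψ`. -/
noncomputable def Dwc [DecidableEq ι] (f : (ι → Option O) → ℝ) (U : Set (ι → O))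
    (e : ι) (ψ : ι → Option O) : ℝ :=
  sInf ((fun o => f (extendPR ψ e o) - f ψ) '' Ostates U e ψ)

/-- `f` is worst-case monotone. -/
def WCMonotone [DecidableEq ι] (f : (ι → Option O) → ℝ) (U : Set (ι → O)) : Prop :=
  ∀ ψ : ι → Option O, (∃ φ ∈ U, consistent φ ψ) →
    ∀ e, e ∉ dom ψ → 0 ≤ Dwc f U e ψ

/-- `f` is worst-case submodular. -/
def WCSubmodular [DecidableEq ι] (f : (ι → Option O) → ℝ) (U : Set (ι → O)) : Prop :=
  ∀ ψ ψ' : ι → Option O, subreal ψ ψ' → (∃ φ ∈ U, consistent φ ψ') →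
    ∀ e, e ∉ dom ψ' → Dwc f U e ψ' ≤ Dwc f U e ψ

/-- An adaptive policy maps each observation either to an item outside its
domain or to `none` (stop). -/
def ValidPolicy (π : (ι → Option O) → Option ι) : Prop :=
  ∀ ψ e, π ψ = some e → ψ e = none

/-- One step of executing policy `π` under realization `φ`. -/
def stepPolicy [DecidableEq ι] (π : (ι → Option O) → Option ι) (φ : ι → O)
    (ψ : ι → Option O) : ι → Option O :=
  match π ψ with
  | none => ψ
  | some e => extendPR ψ e (φ e)

/-- Executing policy `π` under realization `φ` for `n` steps, starting from the
empty observation. -/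
def runPolicy [DecidableEq ι] (π : (ι → Option O) → Option ι) (φ : ι → O) :
    ℕ → ι → Option O
  | 0 => emptyPR
  | n + 1 => stepPolicy π φ (runPolicy π φ n)

/-- The final partial realization `ψ(π, φ)` produced by executing `π` under `φ`
(a valid policy over a finite ground set terminates within `card ι` steps). -/
def finalPR [DecidableEq ι] [Fintype ι] (π : (ι → Option O) → Option ι) (φ : ι → O) :
    ι → Option O :=
  runPolicy π φ (Fintype.card ι)

open scoped Classical in
/-- The total cost `c(dom ψ)` of the items in the domain of `ψ`. -/
noncomputable def costPR [Fintype ι] (c : ι → ℝ) (ψ : ι → Option O) : ℝ :=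
  ∑ e : ι, if (ψ e).isSome then c e else 0

/-- The worst-case cost `c_wc(π) = max_{φ ∈ U} c(dom ψ(π, φ))`. -/
noncomputable def cwc [DecidableEq ι] [Fintype ι] (c : ι → ℝ) (U : Set (ι → O))
    (π : (ι → Option O) → Option ι) : ℝ :=
  sSup ((fun φ => costPR c (finalPR π φ)) '' U)

/-- The worst-case utility `f_wc(π) = min_{φ ∈ U} f(ψ(π, φ))`. -/
noncomputable def fwc [DecidableEq ι] [Fintype ι] (f : (ι → Option O) → ℝ)
    (U : Set (ι → O)) (π : (ι → Option O) → Option ι) : ℝ :=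
  sInf ((fun φ => f (finalPR π φ)) '' U)

/-- `ψ` is reachable by executing `π` under some realization in `U`. -/
def Reachable [DecidableEq ι] (π : (ι → Option O) → Option ι) (U : Set (ι → O))
    (ψ : ι → Option O) : Prop :=
  ∃ φ ∈ U, ∃ n, runPolicy π φ n = ψ

/-- Policy `π` covers the goal value `Q`: under every realization in `U`,
its final observation has utility at least `Q`. -/
def Covers [DecidableEq ι] [Fintype ι] (f : (ι → Option O) → ℝ) (U : Set (ι → O))
    (π : (ι → Option O) → Option ι) (Q : ℝ) : Prop :=
  ∀ φ ∈ U, Q ≤ f (finalPR π φ)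

/-- The worst-case density-greedy policy for the cover problem with goal `Q`:
it stops at observations with `f ψ ≥ Q`, and at any reachable observation with
`f ψ < Q` it selects an item maximizing `Δwc(e | ψ) / c(e)`. -/
def CoverGreedy [DecidableEq ι] [Fintype ι] (f : (ι → Option O) → ℝ)
    (U : Set (ι → O)) (c : ι → ℝ) (Q : ℝ) (π : (ι → Option O) → Option ι) : Prop :=
  ValidPolicy π ∧
  (∀ ψ : ι → Option O, Q ≤ f ψ → π ψ = none) ∧
  (∀ ψ : ι → Option O, Reachable π U ψ → f ψ < Q →
    ∃ e, e ∉ dom ψ ∧ π ψ = some e ∧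
      ∀ e', e' ∉ dom ψ → Dwc f U e' ψ / c e' ≤ Dwc f U e ψ / c e)

/-- The budgeted worst-case density-greedy policy: at any reachable observation
it picks a density-maximizing item and selects it if the budget permits,
stopping otherwise. -/
def BudgetGreedy [DecidableEq ι] [Fintype ι] (f : (ι → Option O) → ℝ)
    (U : Set (ι → O)) (c : ι → ℝ) (B : ℝ) (π : (ι → Option O) → Option ι) : Prop :=
  ValidPolicy π ∧
  ∀ ψ : ι → Option O, Reachable π U ψ → dom ψ ≠ Set.univ →
    ∃ e, e ∉ dom ψ ∧
      (∀ e', e' ∉ dom ψ → Dwc f U e' ψ / c e' ≤ Dwc f U e ψ / c e) ∧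
      ((costPR c ψ + c e ≤ B ∧ π ψ = some e) ∨ (B < costPR c ψ + c e ∧ π ψ = none))

/-- The relaxed budgeted worst-case density-greedy policy: it keeps selecting
density-maximizing items while the cost spent so far is within the budget
(thus also selecting the first item that makes the total cost exceed the
budget), and stops once the budget has been exceeded. -/
def RelaxedBudgetGreedy [DecidableEq ι] [Fintype ι] (f : (ι → Option O) → ℝ)
    (U : Set (ι → O)) (c : ι → ℝ) (B : ℝ) (π : (ι → Option O) → Option ι) : Prop :=
  ValidPolicy π ∧
  (∀ ψ : ι → Option O, Reachable π U ψ → B < costPR c ψ → π ψ = none) ∧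
  (∀ ψ : ι → Option O, Reachable π U ψ → costPR c ψ ≤ B → dom ψ ≠ Set.univ →
    ∃ e, e ∉ dom ψ ∧ π ψ = some e ∧
      ∀ e', e' ∉ dom ψ → Dwc f U e' ψ / c e' ≤ Dwc f U e ψ / c e)

section AuxLemmas

variable {ι O : Type*}

lemma consistent_of_subreal {φ : ι → O} {χ χ' : ι → Option O}
    (hsub : subreal χ χ') (h : consistent φ χ') : consistent φ χ :=
  fun e o he => h e o (hsub e o he)

lemma subreal_refl (χ : ι → Option O) : subreal χ χ := fun _ _ he => he

lemma subreal_trans {a b c : ι → Option O} (h1 : subreal a b) (h2 : subreal b c) :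
    subreal a c := fun e o he => h2 e o (h1 e o he)

lemma subreal_extendPR [DecidableEq ι] {χ : ι → Option O} {e : ι} (he : χ e = none) (o : O) :
    subreal χ (extendPR χ e o) := by
  intro x ox hx
  simp only [extendPR]
  split
  · next hxe => subst hxe; rw [he] at hx; exact absurd hx (by simp)
  · exact hx

lemma consistent_extendPR [DecidableEq ι] {φ : ι → O} {χ : ι → Option O} {e : ι} {o : O}
    (h : consistent φ χ) (he : φ e = o) : consistent φ (extendPR χ e o) := by
  intro x ox hx
  by_cases hxe : x = e
  · subst hxe
    simp only [extendPR, if_pos rfl] at hx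
    rw [he]; exact Option.some.inj hx.symm ▸ rfl
  · simp only [extendPR, if_neg hxe] at hx
    exact h x ox hx

/-- Merge: take values of `χ` where defined, else values of `ψ`. -/
def mergePR (ψ χ : ι → Option O) : ι → Option O := fun x => (χ x).elim (ψ x) some

lemma mergePR_empty (ψ : ι → Option O) : mergePR ψ emptyPR = ψ := rfl

lemma mergePR_extend [DecidableEq ι] (ψ χ : ι → Option O) (e : ι) (o : O) :
    mergePR ψ (extendPR χ e o) = extendPR (mergePR ψ χ) e o := by
  funext x
  simp only [mergePR, extendPR]
  split <;> rfl

lemma subreal_mergePR (ψ χ : ι → Option O) : subreal χ (mergePR ψ χ) := by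
  intro e o he; simp [mergePR, he]

lemma mergePR_none {ψ χ : ι → Option O} {e : ι} (h : χ e = none) :
    mergePR ψ χ e = ψ e := by simp [mergePR, h]

section Fin
variable [DecidableEq ι] [Finite O]

lemma Dwc_le {f : (ι → Option O) → ℝ} {U : Set (ι → O)} {e : ι} {ψ : ι → Option O} {o : O}
    (ho : o ∈ Ostates U e ψ) :
    Dwc f U e ψ ≤ f (extendPR ψ e o) - f ψ :=
  csInf_le (((Set.toFinite _).image _).bddBelow) ⟨o, ho, rfl⟩

lemma exists_worst {f : (ι → Option O) → ℝ} {U : Set (ι → O)} {e : ι} {ψ : ι → Option O}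
    (hne : ∃ φ ∈ U, consistent φ ψ) :
    ∃ o ∈ Ostates U e ψ, f (extendPR ψ e o) - f ψ = Dwc f U e ψ := by
  obtain ⟨φ, hφ, hcons⟩ := hne
  have hne' : ((fun o => f (extendPR ψ e o) - f ψ) '' Ostates U e ψ).Nonempty :=
    ⟨_, ⟨φ e, ⟨φ, hφ, hcons, rfl⟩, rfl⟩⟩
  obtain ⟨o, ho, heq⟩ := hne'.csInf_mem ((Set.toFinite _).image _)
  exact ⟨o, ho, heq⟩

/-- Along a chain of observations consistent with some realization,
a worst-case monotone `f` is monotone. -/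
lemma climb [Fintype ι] {f : (ι → Option O) → ℝ} {U : Set (ι → O)}
    (hmono : WCMonotone f U) :
    ∀ (n : ℕ) (χ χ' : ι → Option O),
      {x | χ x = none ∧ χ' x ≠ none}.ncard = n →
      subreal χ χ' → (∃ φ ∈ U, consistent φ χ') → f χ ≤ f χ' := by
  intro n
  induction n with
  | zero =>
    intro χ χ' hcard hsub _
    have hempty : {x | χ x = none ∧ χ' x ≠ none} = ∅ :=
      ((Set.ncard_eq_zero (Set.toFinite _)).mp hcard)
    have hEq : χ = χ' := by
      funext x
      cases hx : χ x with
      | some o => exact (hsub x o hx).symm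
      | none =>
        cases hx' : χ' x with
        | none => rfl
        | some o =>
          exfalso
          have hx2 : x ∈ ({x | χ x = none ∧ χ' x ≠ none} : Set ι) :=
            ⟨hx, by simp [hx']⟩
          rw [hempty] at hx2
          exact hx2
    rw [hEq]
  | succ n ih =>
    intro χ χ' hcard hsub hcons
    have hne : {x | χ x = none ∧ χ' x ≠ none}.Nonempty := by
      apply Set.nonempty_of_ncard_ne_zero; omega
    obtain ⟨e, he1, he2⟩ := hne
    obtain ⟨o, ho⟩ := Option.ne_none_iff_exists'.mp he2
    obtain ⟨φ, hφU, hφc⟩ := hcons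
    have hφχ : consistent φ χ := consistent_of_subreal hsub hφc
    have hoO : o ∈ Ostates U e χ := ⟨φ, hφU, hφχ, hφc e o ho⟩
    have h1 : 0 ≤ Dwc f U e χ := hmono χ ⟨φ, hφU, hφχ⟩ e (by simp [dom, he1])
    have h2 : Dwc f U e χ ≤ f (extendPR χ e o) - f χ := Dwc_le hoO
    have hsub' : subreal (extendPR χ e o) χ' := by
      intro x ox hx
      by_cases hxe : x = e
      · subst hxe
        simp only [extendPR, if_pos rfl] at hx
        rw [← Option.some.inj hx]
        exact ho
      · simp only [extendPR, if_neg hxe] at hx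
        exact hsub x ox hx
    have hcard' : {x | extendPR χ e o x = none ∧ χ' x ≠ none}.ncard = n := by
      have hset : {x | extendPR χ e o x = none ∧ χ' x ≠ none} =
          {x | χ x = none ∧ χ' x ≠ none} \ {e} := by
        ext x
        simp only [extendPR, Set.mem_setOf_eq, Set.mem_diff, Set.mem_singleton_iff]
        by_cases hxe : x = e
        · subst hxe; simp
        · simp [hxe]
      rw [hset]
      have hmem : e ∈ {x | χ x = none ∧ χ' x ≠ none} := ⟨he1, he2⟩
      have := Set.ncard_diff_singleton_of_mem hmem
      omega
    have := ih (extendPR χ e o) χ' hcard' hsub' ⟨φ, hφU, hφc⟩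
    linarith

end Fin

section Adv
variable [DecidableEq ι] [Finite O] [Nonempty O]

open scoped Classical in
/-- A worst outcome of item `e` given observation `μ`. -/
noncomputable def worstO (f : (ι → Option O) → ℝ) (U : Set (ι → O)) (e : ι)
    (μ : ι → Option O) : O :=
  if h : ∃ o ∈ Ostates U e μ, f (extendPR μ e o) - f μ = Dwc f U e μ then h.choose
  else Classical.arbitrary O

lemma worstO_spec {f : (ι → Option O) → ℝ} {U : Set (ι → O)} {e : ι} {μ : ι → Option O}
    (hne : ∃ φ ∈ U, consistent φ μ) :
    worstO f U e μ ∈ Ostates U e μ ∧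
      f (extendPR μ e (worstO f U e μ)) - f μ = Dwc f U e μ := by
  classical
  have h := exists_worst (f := f) (U := U) (e := e) hne
  rw [worstO, dif_pos h]
  exact ⟨h.choose_spec.1, h.choose_spec.2⟩

/-- One step of the adversarial execution of `πs` against base observation `ψ`. -/
noncomputable def advStep (f : (ι → Option O) → ℝ) (U : Set (ι → O))
    (πs : (ι → Option O) → Option ι) (ψ ρ : ι → Option O) : ι → Option O :=
  match πs ρ with
  | none => ρ
  | some e => extendPR ρ e (worstO f U e (mergePR ψ ρ))

lemma advStep_none {f : (ι → Option O) → ℝ} {U : Set (ι → O)}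
    {πs : (ι → Option O) → Option ι} {ψ ρ : ι → Option O} (hπ : πs ρ = none) :
    advStep f U πs ψ ρ = ρ := by
  unfold advStep; rw [hπ]

lemma advStep_some {f : (ι → Option O) → ℝ} {U : Set (ι → O)}
    {πs : (ι → Option O) → Option ι} {ψ ρ : ι → Option O} {e : ι} (hπ : πs ρ = some e) :
    advStep f U πs ψ ρ = extendPR ρ e (worstO f U e (mergePR ψ ρ)) := by
  unfold advStep; rw [hπ]

/-- The adversarial execution of `πs` against base observation `ψ`. -/
noncomputable def advRun (f : (ι → Option O) → ℝ) (U : Set (ι → O))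
    (πs : (ι → Option O) → Option ι) (ψ : ι → Option O) : ℕ → ι → Option O
  | 0 => emptyPR
  | n + 1 => advStep f U πs ψ (advRun f U πs ψ n)

end Adv

lemma costPR_empty [Fintype ι] (c : ι → ℝ) : costPR c (emptyPR : ι → Option O) = 0 := by
  simp [costPR, emptyPR]

lemma costPR_extend [Fintype ι] [DecidableEq ι] (c : ι → ℝ) {χ : ι → Option O} {e : ι}
    (he : χ e = none) (o : O) :
    costPR c (extendPR χ e o) = costPR c χ + c e := by
  classical
  unfold costPR
  rw [← Finset.sum_erase_add _ _ (Finset.mem_univ e),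
    ← Finset.sum_erase_add _ _ (Finset.mem_univ e)]
  have h1 : ∀ x ∈ Finset.univ.erase e,
      (if (extendPR χ e o x).isSome then c x else 0) = (if (χ x).isSome then c x else 0) := by
    intro x hx
    have hxe : x ≠ e := Finset.ne_of_mem_erase hx
    simp [extendPR, hxe]
  rw [Finset.sum_congr rfl h1]
  simp [extendPR, he]

end AuxLemmas
section Key

variable {ι O : Type*}

/-- **Key lemma.** If every undominated item has worst-case density at most `d`
at observation `ψ`, then `Q ≤ f ψ + d · c_wc(π*)` for any covering policy `π*`. -/
lemma key [DecidableEq ι] [Fintype ι] [Finite O] [Nonempty O]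
    {f : (ι → Option O) → ℝ} {U : Set (ι → O)} {c : ι → ℝ}
    (hcpos : ∀ e, 0 < c e)
    (hmono : WCMonotone f U) (hsub : WCSubmodular f U)
    {Q : ℝ} {πs : (ι → Option O) → Option ι} (hπs : ValidPolicy πs)
    (hcov : Covers f U πs Q)
    {ψ : ι → Option O} (hψ : ∃ φ ∈ U, consistent φ ψ)
    {d : ℝ} (hd0 : 0 ≤ d) (hd : ∀ e, ψ e = none → Dwc f U e ψ ≤ d * c e) :
    Q ≤ f ψ + d * cwc c U πs := by
  classical
  set ρ : ℕ → ι → Option O := advRun f U πs ψ with hρdef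
  have hρ0 : ρ 0 = emptyPR := rfl
  have hstep : ∀ n, ρ (n + 1) = advStep f U πs ψ (ρ n) := fun n => rfl
  have inv : ∀ n, (∃ φ ∈ U, consistent φ (mergePR ψ (ρ n))) ∧
      subreal ψ (mergePR ψ (ρ n)) ∧
      f (mergePR ψ (ρ n)) ≤ f ψ + d * costPR c (ρ n) := by
    intro n
    induction n with
    | zero =>
      rw [hρ0, mergePR_empty, costPR_empty]
      exact ⟨hψ, subreal_refl ψ, by simp⟩
    | succ n ihn =>
      obtain ⟨⟨φ, hφU, hφc⟩, hsubψ, hcost⟩ := ihn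
      cases hπ : πs (ρ n) with
      | none =>
        rw [hstep n, advStep_none hπ]
        exact ⟨⟨φ, hφU, hφc⟩, hsubψ, hcost⟩
      | some e =>
        have hρe : ρ n e = none := hπs _ _ hπ
        have hμe : mergePR ψ (ρ n) e = ψ e := mergePR_none hρe
        have hwo := worstO_spec (f := f) (U := U) (e := e) ⟨φ, hφU, hφc⟩
        set w := worstO f U e (mergePR ψ (ρ n)) with hwdef
        have hρ1 : ρ (n + 1) = extendPR (ρ n) e w := by rw [hstep n, advStep_some hπ]
        have hμ1 : mergePR ψ (ρ (n + 1)) = extendPR (mergePR ψ (ρ n)) e w := by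
          rw [hρ1, mergePR_extend]
        have hcost1 : costPR c (ρ (n + 1)) = costPR c (ρ n) + c e := by
          rw [hρ1, costPR_extend c hρe]
        cases hψe : ψ e with
        | some o₀ =>
          have hμe' : mergePR ψ (ρ n) e = some o₀ := by rw [hμe, hψe]
          have hw : w = o₀ := by
            obtain ⟨φw, hφwU, hφwc, hφwe⟩ := hwo.1
            rw [← hφwe]; exact hφwc e o₀ hμe'
          have hEq : mergePR ψ (ρ (n + 1)) = mergePR ψ (ρ n) := by
            rw [hμ1]
            funext x
            by_cases hxe : x = e
            · subst hxe; simp [extendPR, hμe', hw]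
            · simp [extendPR, hxe]
          have hce : 0 ≤ d * c e := mul_nonneg hd0 (hcpos e).le
          refine ⟨⟨φ, hφU, by rw [hEq]; exact hφc⟩, by rw [hEq]; exact hsubψ, ?_⟩
          rw [hEq, hcost1]
          linarith
        | none =>
          have hμen : mergePR ψ (ρ n) e = none := by rw [hμe, hψe]
          obtain ⟨φw, hφwU, hφwc, hφwe⟩ := hwo.1
          have hconsw : consistent φw (mergePR ψ (ρ (n + 1))) := by
            rw [hμ1]; exact consistent_extendPR hφwc hφwe
          have hsubw : subreal ψ (mergePR ψ (ρ (n + 1))) := by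
            rw [hμ1]
            intro x ox hx
            have hxe : x ≠ e := by rintro rfl; rw [hψe] at hx; exact absurd hx (by simp)
            simp only [extendPR, if_neg hxe]
            exact hsubψ x ox hx
          have hmarg : f (mergePR ψ (ρ (n + 1))) - f (mergePR ψ (ρ n)) =
              Dwc f U e (mergePR ψ (ρ n)) := by
            rw [hμ1]; exact hwo.2
          have hsub1 : Dwc f U e (mergePR ψ (ρ n)) ≤ Dwc f U e ψ :=
            hsub ψ _ hsubψ ⟨φ, hφU, hφc⟩ e (by simp [dom, hμen])
          have hde := hd e hψe
          refine ⟨⟨φw, hφwU, hconsw⟩, hsubw, ?_⟩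
          rw [hcost1]
          have hexp : d * (costPR c (ρ n) + c e) = d * costPR c (ρ n) + d * c e := by ring
          linarith
  have hmonoρ : ∀ n, subreal (ρ n) (ρ (n + 1)) := by
    intro n
    cases hπ : πs (ρ n) with
    | none => rw [hstep n, advStep_none hπ]; exact subreal_refl _
    | some e =>
      rw [hstep n, advStep_some hπ]
      exact subreal_extendPR (hπs _ _ hπ) _
  have hchain : ∀ a b : ℕ, a ≤ b → subreal (ρ a) (ρ b) := by
    intro a b hab
    induction hab with
    | refl => exact subreal_refl _
    | step _ ih => exact subreal_trans ih (hmonoρ _)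
  obtain ⟨φf, hφfU, hφfc⟩ := (inv (Fintype.card ι)).1
  have hφfρ : ∀ n, n ≤ Fintype.card ι → consistent φf (ρ n) := fun n hn =>
    consistent_of_subreal
      (subreal_trans (hchain n _ hn) (subreal_mergePR ψ (ρ (Fintype.card ι)))) hφfc
  have hruneq : ∀ n, n ≤ Fintype.card ι → runPolicy πs φf n = ρ n := by
    intro n
    induction n with
    | zero => intro _; rfl
    | succ n ihn =>
      intro hn
      have hn' : n ≤ Fintype.card ι := by omega
      show stepPolicy πs φf (runPolicy πs φf n) = ρ (n + 1)
      rw [ihn hn']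
      cases hπ : πs (ρ n) with
      | none =>
        rw [hstep n, advStep_none hπ]
        unfold stepPolicy; rw [hπ]
      | some e =>
        have hwe : φf e = worstO f U e (mergePR ψ (ρ n)) := by
          have h1 : ρ (n + 1) e = some (worstO f U e (mergePR ψ (ρ n))) := by
            rw [hstep n, advStep_some hπ]; simp [extendPR]
          exact hφfρ (n + 1) hn _ _ h1
        rw [hstep n, advStep_some hπ]
        unfold stepPolicy; rw [hπ]
        show extendPR (ρ n) e (φf e) = extendPR (ρ n) e (worstO f U e (mergePR ψ (ρ n)))
        rw [hwe]
  have hfinal : finalPR πs φf = ρ (Fintype.card ι) := hruneq _ le_rfl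
  have hcostle : costPR c (ρ (Fintype.card ι)) ≤ cwc c U πs := by
    rw [← hfinal]
    exact le_csSup ((Set.toFinite U).image _).bddAbove ⟨φf, hφfU, rfl⟩
  have hQle : Q ≤ f (ρ (Fintype.card ι)) := by rw [← hfinal]; exact hcov φf hφfU
  have hclimb : f (ρ (Fintype.card ι)) ≤ f (mergePR ψ (ρ (Fintype.card ι))) :=
    climb hmono _ _ _ rfl (subreal_mergePR ψ _) (inv (Fintype.card ι)).1
  have h3 := (inv (Fintype.card ι)).2.2
  have h4 : d * costPR c (ρ (Fintype.card ι)) ≤ d * cwc c U πs :=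
    mul_le_mul_of_nonneg_left hcostle hd0
  linarith

end Key
/-- **Theorem 1.** Suppose `f` is worst-case monotone and worst-case submodular,
`f ∅ = 0` and `f φ = Q > 0` for every `φ ∈ U`. Let `π^g` be a worst-case
density-greedy policy, `φ'` a worst-case realization of `π^g`, and `h` the
virtual-time utility interpolant of the execution of `π^g` under `φ'` (given
below by its trace `e' 1, …, e' m`, `∅ = ψ' 0 ⊆ … ⊆ ψ' m` and partial sums
`s`). Then for every adaptive policy `π*` covering `Q` with worst-case cost
`c* > 0` and every positive integer `L`, `h L ≥ (1 − e^{−L/c*}) · Q`. -/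
theorem stmt_8 {ι O : Type*} [Fintype ι] [Nonempty ι] [DecidableEq ι] [Fintype O]
    (U : Set (ι → O)) (hU : U.Nonempty)
    (c : ι → ℕ) (hc : ∀ e, 0 < c e)
    (f : (ι → Option O) → ℝ) (hf0 : ∀ ψ, 0 ≤ f ψ)
    (hmono : WCMonotone f U) (hsub : WCSubmodular f U)
    (Q : ℝ) (hQ : 0 < Q) (hempty : f emptyPR = 0)
    (hfull : ∀ φ ∈ U, f (toPR φ) = Q)
    (πg : (ι → Option O) → Option ι)
    (hg : CoverGreedy f U (fun e => (c e : ℝ)) Q πg)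
    (φ' : ι → O) (hφ'U : φ' ∈ U)
    (hworst : ∀ φ ∈ U, f (finalPR πg φ') ≤ f (finalPR πg φ))
    -- the execution trace of π^g under φ'
    (m : ℕ) (e' : ℕ → ι) (ψ' : ℕ → ι → Option O)
    (hψ'0 : ψ' 0 = emptyPR)
    (hsel : ∀ t : ℕ, t < m → πg (ψ' t) = some (e' (t + 1)))
    (hupd : ∀ t : ℕ, t < m → ψ' (t + 1) = extendPR (ψ' t) (e' (t + 1)) (φ' (e' (t + 1))))
    (hstop : πg (ψ' m) = none)
    (s : ℕ → ℕ) (hs : ∀ t : ℕ, s t = ∑ i ∈ Finset.range t, c (e' (i + 1)))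
    -- the virtual-time utility interpolant h
    (h : ℕ → ℝ) (hh0 : h 0 = 0)
    (hhmid : ∀ l t : ℕ, 1 ≤ l → l ≤ s m → 1 ≤ t → t ≤ m → s (t - 1) < l → l ≤ s t →
      h l = f (ψ' (t - 1)) +
        (((l : ℝ) - (s (t - 1) : ℝ)) / (c (e' t) : ℝ)) * (f (ψ' t) - f (ψ' (t - 1))))
    (hhtail : ∀ l : ℕ, s m < l → h l = f (ψ' m))
    -- an arbitrary covering policy π*
    (πs : (ι → Option O) → Option ι) (hπs : ValidPolicy πs)
    (hcov : Covers f U πs Q)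
    (hcs : 0 < cwc (fun e => (c e : ℝ)) U πs) :
    ∀ L : ℕ, 0 < L →
      (1 - Real.exp (-(L : ℝ) / cwc (fun e => (c e : ℝ)) U πs)) * Q ≤ h L := by
  have hO : Nonempty O := ⟨φ' (Classical.arbitrary ι)⟩
  set cs := cwc (fun e => (c e : ℝ)) U πs with hcsdef
  have hcpos : ∀ x : ι, (0 : ℝ) < (c x : ℝ) := fun x => by exact_mod_cast hc x
  -- basic facts about the greedy trace
  have hrun : ∀ t, t ≤ m → runPolicy πg φ' t = ψ' t := by
    intro t
    induction t with
    | zero => intro _; rw [hψ'0]; rfl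
    | succ t iht =>
      intro ht
      have htm : t < m := ht
      show stepPolicy πg φ' (runPolicy πg φ' t) = ψ' (t + 1)
      rw [iht htm.le, hupd t htm]
      unfold stepPolicy
      rw [hsel t htm]
  have hconsψ : ∀ t, t ≤ m → consistent φ' (ψ' t) := by
    intro t
    induction t with
    | zero =>
      intro _
      rw [hψ'0]
      intro x o hx
      exact absurd hx (by simp [emptyPR])
    | succ t iht =>
      intro ht
      have htm : t < m := ht
      rw [hupd t htm]
      exact consistent_extendPR (iht htm.le) rfl
  have hreach : ∀ t, t ≤ m → Reachable πg U (ψ' t) := fun t ht => ⟨φ', hφ'U, t, hrun t ht⟩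
  have hflt : ∀ t, t < m → f (ψ' t) < Q := by
    intro t ht
    by_contra hge
    push_neg at hge
    have hnone := hg.2.1 (ψ' t) hge
    have hsome := hsel t ht
    rw [hnone] at hsome
    exact absurd hsome (by simp)
  have hfm : Q ≤ f (ψ' m) := by
    by_contra hlt
    push_neg at hlt
    obtain ⟨e0, _, hsome, _⟩ := hg.2.2 (ψ' m) (hreach m le_rfl) hlt
    rw [hstop] at hsome
    exact absurd hsome (by simp)
  have hdome : ∀ t, t < m → ψ' t (e' (t + 1)) = none := fun t ht => hg.1 _ _ (hsel t ht)
  have hΔ : ∀ t, t < m → Dwc f U (e' (t + 1)) (ψ' t) ≤ f (ψ' (t + 1)) - f (ψ' t) := by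
    intro t ht
    have hmem : φ' (e' (t + 1)) ∈ Ostates U (e' (t + 1)) (ψ' t) :=
      ⟨φ', hφ'U, hconsψ t ht.le, rfl⟩
    have hle := Dwc_le (f := f) hmem
    rw [← hupd t ht] at hle
    exact hle
  have hD0 : ∀ t, t < m → 0 ≤ Dwc f U (e' (t + 1)) (ψ' t) := fun t ht =>
    hmono _ ⟨φ', hφ'U, hconsψ t ht.le⟩ _ (by simp [dom, hdome t ht])
  have hΔ0 : ∀ t, t < m → 0 ≤ f (ψ' (t + 1)) - f (ψ' t) := fun t ht =>
    le_trans (hD0 t ht) (hΔ t ht)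
  have hgmax : ∀ t, t < m → ∀ x, ψ' t x = none →
      Dwc f U x (ψ' t) / (c x : ℝ) ≤ Dwc f U (e' (t + 1)) (ψ' t) / (c (e' (t + 1)) : ℝ) := by
    intro t ht x mx
    obtain ⟨e0, he0dom, he0sel, hmax⟩ := hg.2.2 (ψ' t) (hreach t ht.le) (hflt t ht)
    have he0 : e0 = e' (t + 1) := by
      have hsome := hsel t ht
      rw [he0sel] at hsome
      exact Option.some.inj hsome
    rw [← he0]
    exact hmax x (by simp [dom, mx])
  have hkey : ∀ t, t < m →
      (Q - f (ψ' t)) / cs ≤ Dwc f U (e' (t + 1)) (ψ' t) / (c (e' (t + 1)) : ℝ) := by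
    intro t ht
    set d := Dwc f U (e' (t + 1)) (ψ' t) / (c (e' (t + 1)) : ℝ) with hddef
    have hd0 : 0 ≤ d := div_nonneg (hD0 t ht) (hcpos _).le
    have hdall : ∀ x, ψ' t x = none → Dwc f U x (ψ' t) ≤ d * (c x : ℝ) := by
      intro x mx
      have hx := hgmax t ht x mx
      rw [div_le_iff₀ (hcpos x)] at hx
      exact hx
    have hk := key (c := fun e => (c e : ℝ)) hcpos hmono hsub hπs hcov
      ⟨φ', hφ'U, hconsψ t ht.le⟩ hd0 hdall
    rw [div_le_iff₀ hcs]
    linarith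
  -- facts about s
  have hs_succ : ∀ t, s (t + 1) = s t + c (e' (t + 1)) := by
    intro t; rw [hs, hs, Finset.sum_range_succ]
  have hs0 : s 0 = 0 := by rw [hs]; simp
  have hsmono : Monotone s := by
    apply monotone_nat_of_le_succ
    intro t
    have := hc (e' (t + 1))
    rw [hs_succ]
    omega
  have hts : ∀ t, t ≤ s t := by
    intro t
    rw [hs]
    calc t = ∑ _i ∈ Finset.range t, 1 := by simp
      _ ≤ _ := Finset.sum_le_sum (fun i _ => hc _)
  have hval : ∀ t, t ≤ m → h (s t) = f (ψ' t) := by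
    intro t htm
    cases t with
    | zero => rw [hs0, hh0, hψ'0, hempty]
    | succ k =>
      have h1 : 1 ≤ s (k + 1) := le_trans (by omega) (hts (k + 1))
      have h2 : s (k + 1) ≤ s m := hsmono htm
      have h3 : s (k + 1 - 1) < s (k + 1) := by
        simp only [Nat.add_sub_cancel]
        have := hc (e' (k + 1))
        rw [hs_succ]
        omega
      have hmid := hhmid (s (k + 1)) (k + 1) h1 h2 (by omega) htm h3 le_rfl
      simp only [Nat.add_sub_cancel] at hmid
      rw [hmid, hs_succ k]
      have hcc : (c (e' (k + 1)) : ℝ) ≠ 0 := (hcpos _).ne'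
      push_cast
      field_simp
      ring
  -- the main induction
  have hG : ∀ l : ℕ, Q - h l ≤ Real.exp (-(l : ℝ) / cs) * Q := by
    intro l
    induction l with
    | zero =>
      rw [hh0]
      norm_num
    | succ l ih =>
      by_cases hsm : s m < l + 1
      · have htail := hhtail (l + 1) hsm
        have hpos : 0 < Real.exp (-((l + 1 : ℕ) : ℝ) / cs) * Q := by positivity
        rw [htail]
        linarith
      · push_neg at hsm
        obtain ⟨k, hk1, hk2, hkm⟩ : ∃ k, s k < l + 1 ∧ l + 1 ≤ s (k + 1) ∧ k < m := by
          have hex : ∃ t, l + 1 ≤ s t := ⟨m, hsm⟩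
          have ht1 : 1 ≤ Nat.find hex := by
            by_contra h0
            have h0' : Nat.find hex = 0 := by omega
            have := Nat.find_spec hex
            rw [h0', hs0] at this
            omega
          have hmin := Nat.find_min hex (m := Nat.find hex - 1) (by omega)
          have hspec := Nat.find_spec hex
          have hminm : Nat.find hex ≤ m := Nat.find_min' hex hsm
          refine ⟨Nat.find hex - 1, by omega, ?_, by omega⟩
          have : Nat.find hex - 1 + 1 = Nat.find hex := by omega
          rw [this]
          exact hspec
        have hmain := hhmid (l + 1) (k + 1) (by omega) hsm (by omega) (by omega)
          (by simpa using hk1) hk2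
        simp only [Nat.add_sub_cancel] at hmain
        have hD0' : 0 ≤ f (ψ' (k + 1)) - f (ψ' k) := hΔ0 k hkm
        have hce : (0 : ℝ) < (c (e' (k + 1)) : ℝ) := hcpos _
        have hstep : h (l + 1) = h l + (f (ψ' (k + 1)) - f (ψ' k)) / (c (e' (k + 1)) : ℝ) := by
          rcases Nat.lt_or_ge (s k) l with hskl | hskl
          · have hmain' := hhmid l (k + 1) (by omega) (by omega) (by omega) (by omega)
              (by simpa using hskl) (by omega)
            simp only [Nat.add_sub_cancel] at hmain'
            rw [hmain, hmain']
            push_cast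
            field_simp
            ring
          · have hsk : s k = l := by omega
            have hvk : h l = f (ψ' k) := by rw [← hsk]; exact hval k (by omega)
            rw [hmain, hvk, hsk]
            push_cast
            field_simp
            ring
        have hhl_ge : f (ψ' k) ≤ h l := by
          rcases Nat.lt_or_ge (s k) l with hskl | hskl
          · have hmain' := hhmid l (k + 1) (by omega) (by omega) (by omega) (by omega)
              (by simpa using hskl) (by omega)
            simp only [Nat.add_sub_cancel] at hmain'
            rw [hmain']
            have hnn : 0 ≤ ((l : ℝ) - (s k : ℝ)) / (c (e' (k + 1)) : ℝ) := by
              apply div_nonneg _ hce.le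
              have : (s k : ℝ) ≤ (l : ℝ) := by exact_mod_cast hskl.le
              linarith
            nlinarith
          · have hsk : s k = l := by omega
            rw [← hsk, hval k (by omega)]
        have hslope : (Q - f (ψ' k)) / cs ≤
            (f (ψ' (k + 1)) - f (ψ' k)) / (c (e' (k + 1)) : ℝ) := by
          refine le_trans (hkey k hkm) ?_
          gcongr
          exact hΔ k hkm
        by_cases hpos : 0 < Q - h l
        · have hnum : Q - h l ≤ Q - f (ψ' k) := by linarith
          have h0 : (Q - h l) / cs ≤ (Q - f (ψ' k)) / cs := by gcongr
          have h1 : (Q - h l) / cs ≤ (f (ψ' (k + 1)) - f (ψ' k)) / (c (e' (k + 1)) : ℝ) :=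
            le_trans h0 hslope
          have hexp1 : 1 - 1 / cs ≤ Real.exp (-(1 / cs)) := by
            have := Real.add_one_le_exp (-(1 / cs))
            linarith
          have hrec : Q - h (l + 1) ≤ (Q - h l) * Real.exp (-(1 / cs)) := by
            have heq : Q - h (l + 1) = (Q - h l) - (f (ψ' (k + 1)) - f (ψ' k)) / (c (e' (k + 1)) : ℝ) := by
              rw [hstep]; ring
            have h3 : (Q - h l) - (f (ψ' (k + 1)) - f (ψ' k)) / (c (e' (k + 1)) : ℝ) ≤
                (Q - h l) - (Q - h l) / cs := by linarith [h1]
            have h4 : (Q - h l) - (Q - h l) / cs = (Q - h l) * (1 - 1 / cs) := by ring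
            have h5 : (Q - h l) * (1 - 1 / cs) ≤ (Q - h l) * Real.exp (-(1 / cs)) :=
              mul_le_mul_of_nonneg_left hexp1 hpos.le
            linarith
          have h6 : (Q - h l) * Real.exp (-(1 / cs)) ≤
              (Real.exp (-(l : ℝ) / cs) * Q) * Real.exp (-(1 / cs)) :=
            mul_le_mul_of_nonneg_right ih (Real.exp_pos _).le
          have h7 : (Real.exp (-(l : ℝ) / cs) * Q) * Real.exp (-(1 / cs)) =
              Real.exp (-((l + 1 : ℕ) : ℝ) / cs) * Q := by
            rw [mul_right_comm, ← Real.exp_add]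
            congr 2
            push_cast
            ring
          linarith
        · push_neg at hpos
          have hnn : 0 ≤ (f (ψ' (k + 1)) - f (ψ' k)) / (c (e' (k + 1)) : ℝ) :=
            div_nonneg hD0' hce.le
          have hpos2 : 0 < Real.exp (-((l + 1 : ℕ) : ℝ) / cs) * Q := by positivity
          rw [hstep]
          linarith
  intro L _hL
  have hGL := hG L
  nlinarith [hGL]

end WCAS
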